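/- Let n,d,k be positive integers with d ≤ n. If k=1 or d=1, then h_AR(n,d,k) = n. If k ≥ 2 and d ≥ 2, then h_AR(n,d,k) ≥ max{d, n(k−1)/k^d}. -/

import Mathlib

open scoped Classical
noncomputable section

/-- Attributes are natural numbers. -/
abbrev Attr := ℕ
/-- A value in an equation system: `some δ` is a number, `none` is the special symbol `*`. -/
abbrev Val := Option ℕ
/-- A decision rule: left-hand side (set of equations attribute = numeric value) and
right-hand side (decision). -/
abbrev Rule := Finset (Attr × ℕ) × ℕ
/-- An equation system over attributes with possibly `*` values. -/
abbrev EqSys := Finset (Attr × Val)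
/-- A decision rule system. -/
abbrev DRS := Finset Rule

/-- The equation system `K(r)` of a rule. -/
def Kr (r : Rule) : EqSys := r.1.image fun p => (p.1, some p.2)
/-- The set `A(r)` of attributes of a rule. -/
def Ar (r : Rule) : Finset Attr := r.1.image Prod.fst
/-- The length of a rule. -/
def ruleLen (r : Rule) : ℕ := r.1.card
/-- Well-formed rule: attributes in the left-hand side are pairwise different. -/
def WFRule (r : Rule) : Prop := ∀ p ∈ r.1, ∀ q ∈ r.1, p.1 = q.1 → p.2 = q.2
/-- Well-formed decision rule system: a finite nonempty set of well-formed rules. -/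
def WFS (S : DRS) : Prop := S.Nonempty ∧ ∀ r ∈ S, WFRule r

/-- `A(S)`: attributes of a system. -/
def AS (S : DRS) : Finset Attr := S.biUnion Ar
/-- `n(S) = |A(S)|`. -/
def nS (S : DRS) : ℕ := (AS S).card
/-- `d(S)`: the maximum length of a rule in `S`. -/
def dS (S : DRS) : ℕ := S.sup ruleLen
/-- `V_S(a)`: values of attribute `a` occurring in `S`. -/
def VS (S : DRS) (a : Attr) : Finset ℕ :=
  S.biUnion fun r => (r.1.filter fun p => p.1 = a).image Prod.snd
/-- `k(S)`: maximum number of values of a single attribute. -/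
def kS (S : DRS) : ℕ := (AS S).sup fun a => (VS S a).card

/-- Branching sets of o-decision trees: `V_S(a)`. -/
def Bo (S : DRS) (a : Attr) : Finset Val := (VS S a).image some
/-- Branching sets of e-decision trees: `EV_S(a) = V_S(a) ∪ {*}`. -/
def Be (S : DRS) (a : Attr) : Finset Val := insert none (Bo S a)

/-- Consistency of an equation system. -/
def Consistent (K : EqSys) : Prop := ∀ p ∈ K, ∀ q ∈ K, p.1 = q.1 → p.2 = q.2

/-- Decision trees: terminal nodes labeled with sets of rules, working nodes labeled
with an attribute and having a child for each possible value (only children whose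
labels lie in the relevant branching set are meaningful). -/
inductive DTree where
  | leaf : DRS → DTree
  | node : Attr → (Val → DTree) → DTree

/-- Depth of a decision tree with respect to branching sets `B`. -/
def depthT (B : Attr → Finset Val) : DTree → ℕ
  | .leaf _ => 0
  | .node a c => ((B a).sup fun v => depthT B (c v)) + 1

/-- A decision tree over a system `S` (with branching sets `B`). -/
def TreeOver (B : Attr → Finset Val) (S : DRS) : DTree → Prop
  | .leaf Z => Z ⊆ S
  | .node a c => a ∈ AS S ∧ ∀ v ∈ B a, TreeOver B S (c v)

/-- `PathT B Γ K Z`: there is a complete path in `Γ` (following edges with labels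
in the branching sets `B`) with equation system `K` and terminal label `Z`. -/
inductive PathT (B : Attr → Finset Val) : DTree → EqSys → DRS → Prop
  | leaf (Z : DRS) : PathT B (.leaf Z) ∅ Z
  | node (a : Attr) (c : Val → DTree) (v : Val) (K : EqSys) (Z : DRS) :
      v ∈ B a → PathT B (c v) K Z → PathT B (.node a c) (insert (a, v) K) Z

/-- `Γ` solves the problem given by correctness condition `cond` on (K(ξ), τ(ξ)). -/
def Solves (cond : EqSys → DRS → Prop) (B : Attr → Finset Val) (Γ : DTree) : Prop :=
  ∀ K Z, PathT B Γ K Z → Consistent K → cond K Z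

/-- Correctness condition for the All Rules problem. -/
def CondAR (S : DRS) (K : EqSys) (Z : DRS) : Prop :=
  (∀ r ∈ Z, Kr r ⊆ K) ∧ ∀ r ∈ S, r ∉ Z → ¬ Consistent (Kr r ∪ K)
/-- Correctness condition for the All Decisions problem. -/
def CondAD (S : DRS) (K : EqSys) (Z : DRS) : Prop :=
  (∀ r ∈ Z, Kr r ⊆ K) ∧ ∀ r ∈ S, r.2 ∉ Z.image Prod.snd → ¬ Consistent (Kr r ∪ K)
/-- Correctness condition for the Some Rules problem. -/
def CondSR (S : DRS) (K : EqSys) (Z : DRS) : Prop :=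
  (∀ r ∈ Z, Kr r ⊆ K) ∧ (Z = ∅ → ∀ r ∈ S, ¬ Consistent (Kr r ∪ K))

/-- Minimum depth of a decision tree over `S` solving the given problem. -/
def hgen (cond : DRS → EqSys → DRS → Prop) (B : DRS → Attr → Finset Val) (S : DRS) : ℕ :=
  sInf {m | ∃ Γ, TreeOver (B S) S Γ ∧ Solves (cond S) (B S) Γ ∧ depthT (B S) Γ = m}

def hAR (S : DRS) : ℕ := hgen CondAR Bo S
def hEAR (S : DRS) : ℕ := hgen CondAR Be S
def hAD (S : DRS) : ℕ := hgen CondAD Bo S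
def hEAD (S : DRS) : ℕ := hgen CondAD Be S
def hSR (S : DRS) : ℕ := hgen CondSR Bo S
def hESR (S : DRS) : ℕ := hgen CondSR Be S

/-- SR-reduced system. -/
def SRred (S : DRS) : Prop := ∀ r ∈ S, ¬ ∃ r' ∈ S, r'.1 ⊂ r.1
/-- AD-reduced system. -/
def ADred (S : DRS) : Prop := ∀ r ∈ S, ¬ ∃ r' ∈ S, r'.1 ⊂ r.1 ∧ r'.2 = r.2
/-- `R_SR(S)`. -/
def RSR (S : DRS) : DRS := S.filter fun r => ¬ ∃ r' ∈ S, r'.1 ⊂ r.1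
/-- `R_AD(S)`. -/
def RAD (S : DRS) : DRS := S.filter fun r => ¬ ∃ r' ∈ S, r'.1 ⊂ r.1 ∧ r'.2 = r.2

/-- `h_C(n,d,k)`: minimum of `h S` over systems with the given parameters. -/
def hmin (h : DRS → ℕ) (n d k : ℕ) : ℕ :=
  sInf {m | ∃ S, WFS S ∧ nS S = n ∧ dS S = d ∧ kS S = k ∧ h S = m}
/-- `H_C(n,d,k)`: maximum of `h S` over systems with the given parameters. -/
def Hmax (h : DRS → ℕ) (n d k : ℕ) : ℕ :=
  sSup {m | ∃ S, WFS S ∧ nS S = n ∧ dS S = d ∧ kS S = k ∧ h S = m}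
/-- `h_C^R(n,d,k)`: minimum of `h S` over reduced systems (`P`) with given parameters. -/
def hminR (h : DRS → ℕ) (P : DRS → Prop) (n d k : ℕ) : ℕ :=
  sInf {m | ∃ S, WFS S ∧ P S ∧ nS S = n ∧ dS S = d ∧ kS S = k ∧ h S = m}
/-- `H_C^R(n,d,k)`: maximum of `h S` over reduced systems (`P`) with given parameters. -/
def HmaxR (h : DRS → ℕ) (P : DRS → Prop) (n d k : ℕ) : ℕ :=
  sSup {m | ∃ S, WFS S ∧ P S ∧ nS S = n ∧ dS S = d ∧ kS S = k ∧ h S = m}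

/-- Node cover of the hypergraph `G(S)`. -/
def NodeCover (S : DRS) (B : Finset Attr) : Prop :=
  B ⊆ AS S ∧ ∀ r ∈ S, Ar r ≠ ∅ → (Ar r ∩ B).Nonempty
/-- `β(S)`: minimum cardinality of a node cover of `G(S)`. -/
def nodeCoverNum (S : DRS) : ℕ := sInf {m | ∃ B, NodeCover S B ∧ B.card = m}

/-- `I_SR(S)`. -/
def ISR (S : DRS) : DRS := if ∀ r ∈ S, r.1 ≠ ∅ then S else S.filter fun r => r.1 = ∅
/-- `D_0(S)`: right-hand sides of length-0 rules. -/
def D0 (S : DRS) : Finset ℕ := (S.filter fun r => r.1 = ∅).image Prod.snd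
/-- `I_AD(S)`. -/
def IAD (S : DRS) : DRS := S.filter fun r => r.1 = ∅ ∨ r.2 ∉ D0 S

/-- `K(S, δ̄)` for an assignment `f` of numeric values to all attributes of `S`. -/
def KStuple (S : DRS) (f : Attr → ℕ) : EqSys := (AS S).image fun a => (a, some (f a))
/-- An incomplete decision rule system. -/
def IncompleteS (S : DRS) : Prop :=
  ∃ f : Attr → ℕ, (∀ a ∈ AS S, f a ∈ VS S a) ∧ ∀ r ∈ S, ¬ Consistent (Kr r ∪ KStuple S f)

/-- `r_α`: remove from the left-hand side of `r` all equations belonging to `α`. -/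
def resRule (α : EqSys) (r : Rule) : Rule :=
  (r.1.filter fun p => (p.1, (some p.2 : Val)) ∉ α, r.2)
/-- `S_α`: rules `r_α` for the rules `r ∈ S` with `K(r) ∪ α` consistent. -/
def Sres (α : EqSys) (S : DRS) : DRS :=
  (S.filter fun r => Consistent (Kr r ∪ α)).image (resRule α)

/-- Value chosen at a node labeled by an attribute `a ∉ A(S_α)` when building `Γ_α`:
the `α`-value of `a` if `a` occurs in `α`, and the minimum number of `V_S(a)` otherwise. -/
def chooseVal (α : EqSys) (S : DRS) (a : Attr) : Val :=
  if h : ∃ v, (a, v) ∈ α then Classical.choose h else some (sInf {n : ℕ | n ∈ VS S a})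

/-- The decision tree `Γ_α`. -/
def resTree (α : EqSys) (S : DRS) : DTree → DTree
  | .leaf Z => .leaf (Sres α Z)
  | .node a c =>
      if a ∈ AS (Sres α S) then .node a fun v => resTree α S (c v)
      else resTree α S (c (chooseVal α S a))

/-- The o-decision tree `o(Γ)`: remove all nodes reachable only via an edge labeled `*`. -/
def oTree : DTree → DTree
  | .leaf Z => .leaf Z
  | .node a c => .node a fun v => match v with
      | none => .leaf ∅
      | some x => oTree (c (some x))
/-! ### Auxiliary development for Statement 14 -/

section Aux14

lemma mem_VS' {S : DRS} {r : Rule} {p : Attr × ℕ} (hr : r ∈ S) (hp : p ∈ r.1) :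
    p.2 ∈ VS S p.1 := by
  simp only [VS, Finset.mem_biUnion]
  exact ⟨r, hr, Finset.mem_image.mpr ⟨p, Finset.mem_filter.mpr ⟨hp, rfl⟩, rfl⟩⟩

lemma mem_AS' {S : DRS} {r : Rule} {a : Attr} (hr : r ∈ S) (ha : a ∈ Ar r) : a ∈ AS S :=
  Finset.mem_biUnion.mpr ⟨r, hr, ha⟩

lemma VS_nonempty' {S : DRS} {a : Attr} (ha : a ∈ AS S) : (VS S a).Nonempty := by
  obtain ⟨r, hr, har⟩ := Finset.mem_biUnion.mp ha
  obtain ⟨p, hp, hpa⟩ := Finset.mem_image.mp har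
  exact ⟨p.2, hpa ▸ mem_VS' hr hp⟩

/-- default tuple -/
def fdef (S : DRS) (b : Attr) : ℕ :=
  if hb : (VS S b).Nonempty then hb.choose else 0

lemma fdef_mem {S : DRS} {b : Attr} (hb : b ∈ AS S) : fdef S b ∈ VS S b := by
  unfold fdef
  rw [dif_pos (VS_nonempty' hb)]
  exact (VS_nonempty' hb).choose_spec

/-! #### The full tree -/

def fullT (S : DRS) : List Attr → EqSys → DTree
  | [], K => .leaf (S.filter fun r => Kr r ⊆ K)
  | a :: l, K => .node a fun v => fullT S l (insert (a, v) K)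

lemma fullT_over (S : DRS) (l : List Attr) (hl : ∀ a ∈ l, a ∈ AS S) (K : EqSys) :
    TreeOver (Bo S) S (fullT S l K) := by
  induction l generalizing K with
  | nil => exact Finset.filter_subset _ _
  | cons a l ih =>
    exact ⟨hl a List.mem_cons_self, fun v _ => ih (fun b hb => hl b (List.mem_cons_of_mem a hb)) _⟩

lemma fullT_depth (S : DRS) (l : List Attr) (K : EqSys) :
    depthT (Bo S) (fullT S l K) ≤ l.length := by
  induction l generalizing K with
  | nil => simp [fullT, depthT]
  | cons a l ih =>
    simp only [fullT, depthT, List.length_cons]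
    have : ((Bo S a).sup fun v => depthT (Bo S) (fullT S l (insert (a, v) K))) ≤ l.length :=
      Finset.sup_le fun v _ => ih _
    omega

lemma fullT_path (S : DRS) (l : List Attr) :
    ∀ (K0 Kp : EqSys) (Z : DRS), PathT (Bo S) (fullT S l K0) Kp Z →
      (∀ r ∈ Z, Kr r ⊆ K0 ∪ Kp) ∧ (∀ b ∈ l, ∃ v, (b, v) ∈ Kp) ∧
      (∀ r ∈ S, r ∉ Z → ¬ (Kr r ⊆ K0 ∪ Kp)) := by
  induction l with
  | nil =>
    intro K0 Kp Z hpath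
    simp only [fullT] at hpath
    cases hpath with
    | leaf =>
      refine ⟨fun r hr => ?_, by simp, fun r hr hrZ => ?_⟩
      · rw [Finset.union_empty]; exact (Finset.mem_filter.mp hr).2
      · rw [Finset.union_empty]
        intro hsub
        exact hrZ (Finset.mem_filter.mpr ⟨hr, hsub⟩)
  | cons a l ih =>
    intro K0 Kp Z hpath
    simp only [fullT] at hpath
    cases hpath with
    | node _ _ v K Z hv hp =>
      obtain ⟨h1, h2, h3⟩ := ih (insert (a, v) K0) K Z hp
      have hset : insert (a, v) K0 ∪ K = K0 ∪ insert (a, v) K := by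
        rw [Finset.insert_union, Finset.union_insert]
      refine ⟨fun r hr => hset ▸ h1 r hr, ?_, fun r hr hrZ => hset ▸ h3 r hr hrZ⟩
      intro b hb
      rcases List.mem_cons.mp hb with rfl | hb
      · exact ⟨v, Finset.mem_insert_self _ _⟩
      · obtain ⟨w, hw⟩ := h2 b hb
        exact ⟨w, Finset.mem_insert_of_mem hw⟩

lemma Kr_fst_mem {r : Rule} {p : Attr × Val} (hp : p ∈ Kr r) :
    ∃ c : ℕ, p = (p.1, some c) ∧ (p.1, c) ∈ r.1 := by
  obtain ⟨q, hq, hqe⟩ := Finset.mem_image.mp hp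
  exact ⟨q.2, by rw [← hqe], by rw [← hqe]; exact hq⟩

lemma exists_good_tree (S : DRS) :
    ∃ Γ, TreeOver (Bo S) S Γ ∧ Solves (CondAR S) (Bo S) Γ ∧ depthT (Bo S) Γ ≤ nS S := by
  refine ⟨fullT S (AS S).toList ∅, fullT_over S _ (fun a ha => Finset.mem_toList.mp ha) ∅, ?_, ?_⟩
  · intro K Z hpath _
    obtain ⟨h1, h2, h3⟩ := fullT_path S (AS S).toList ∅ K Z hpath
    constructor
    · intro r hr
      have := h1 r hr
      rwa [Finset.empty_union] at this
    · intro r hr hrZ hcons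
      have h3' := h3 r hr hrZ
      rw [Finset.empty_union] at h3'
      obtain ⟨p, hpK, hpnK⟩ := Finset.not_subset.mp h3'
      obtain ⟨c, hpe, hpc⟩ := Kr_fst_mem hpK
      have hp1 : p.1 ∈ AS S := mem_AS' hr (Finset.mem_image.mpr ⟨(p.1, c), hpc, rfl⟩)
      obtain ⟨v, hv⟩ := h2 p.1 (Finset.mem_toList.mpr hp1)
      have hne : p.2 ≠ v := by
        intro h
        apply hpnK
        have : p = (p.1, v) := by rw [hpe]; rw [hpe] at h; simpa using h
        exact this ▸ hv
      exact hne (hcons p (Finset.mem_union_left _ hpK) (p.1, v)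
        (Finset.mem_union_right _ hv) rfl)
  · calc depthT (Bo S) (fullT S (AS S).toList ∅) ≤ (AS S).toList.length := fullT_depth S _ ∅
      _ = nS S := by rw [Finset.length_toList]; rfl

lemma hAR_unfold (S : DRS) : hAR S =
    sInf {m | ∃ Γ, TreeOver (Bo S) S Γ ∧ Solves (CondAR S) (Bo S) Γ ∧ depthT (Bo S) Γ = m} := rfl

lemma hAR_le_nS (S : DRS) : hAR S ≤ nS S := by
  obtain ⟨Γ, h1, h2, h3⟩ := exists_good_tree S
  exact le_trans (Nat.sInf_le ⟨Γ, h1, h2, rfl⟩) h3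

lemma hAR_mem (S : DRS) :
    ∃ Γ, TreeOver (Bo S) S Γ ∧ Solves (CondAR S) (Bo S) Γ ∧ depthT (Bo S) Γ = hAR S := by
  obtain ⟨Γ, h1, h2, h3⟩ := exists_good_tree S
  exact Nat.sInf_mem (s := {m | ∃ Γ, TreeOver (Bo S) S Γ ∧ Solves (CondAR S) (Bo S) Γ ∧
    depthT (Bo S) Γ = m}) ⟨_, Γ, h1, h2, rfl⟩

/-! #### Path of a tuple and the core lemma -/

lemma path_of_tuple (S : DRS) (f : Attr → ℕ) (hf : ∀ a ∈ AS S, f a ∈ VS S a) :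
    ∀ Γ : DTree, TreeOver (Bo S) S Γ →
    ∃ K Z, PathT (Bo S) Γ K Z ∧ (∀ p ∈ K, p.1 ∈ AS S ∧ p.2 = some (f p.1)) ∧
      (K.image Prod.fst).card ≤ depthT (Bo S) Γ := by
  intro Γ
  induction Γ with
  | leaf Z => exact fun _ => ⟨∅, Z, .leaf Z, by simp, by simp⟩
  | node a c ih =>
    rintro ⟨haS, hc⟩
    have hfa : (some (f a)) ∈ Bo S a := Finset.mem_image.mpr ⟨f a, hf a haS, rfl⟩
    obtain ⟨K, Z, hp, hsh, hcard⟩ := ih (some (f a)) (hc _ hfa)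
    refine ⟨insert (a, some (f a)) K, Z, .node a c _ K Z hfa hp, ?_, ?_⟩
    · intro p hp'
      rcases Finset.mem_insert.mp hp' with h | h
      · subst h; exact ⟨haS, rfl⟩
      · exact hsh p h
    · have h1 : ((insert (a, some (f a)) K).image Prod.fst).card ≤ (K.image Prod.fst).card + 1 := by
        rw [Finset.image_insert]; exact Finset.card_insert_le _ _
      have h2 : depthT (Bo S) (c (some (f a))) ≤
          (Bo S a).sup fun v => depthT (Bo S) (c v) :=
        Finset.le_sup (f := fun v => depthT (Bo S) (c v)) hfa
      simp only [depthT]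
      omega

lemma core14 (S : DRS) (hWF : WFS S) (Γ : DTree) (hov : TreeOver (Bo S) S Γ)
    (hso : Solves (CondAR S) (Bo S) Γ) (f : Attr → ℕ) (hf : ∀ a ∈ AS S, f a ∈ VS S a) :
    ∃ Q : Finset Attr, Q.card ≤ depthT (Bo S) Γ ∧
      ∀ a r, r ∈ S → a ∈ Ar r → (∀ p ∈ r.1, p.1 ≠ a → f p.1 = p.2) → a ∈ Q := by
  obtain ⟨K, Z, hp, hsh, hcard⟩ := path_of_tuple S f hf Γ hov
  have hcons : Consistent K := by
    intro p hp' q hq' h1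
    rw [(hsh p hp').2, (hsh q hq').2, h1]
  obtain ⟨hZ1, hZ2⟩ := hso K Z hp hcons
  refine ⟨K.image Prod.fst, hcard, ?_⟩
  intro a r hr har hagree
  by_cases hrZ : r ∈ Z
  · obtain ⟨p, hp', rfl⟩ := Finset.mem_image.mp har
    have : (p.1, (some p.2 : Val)) ∈ K := hZ1 r hrZ (Finset.mem_image.mpr ⟨p, hp', rfl⟩)
    exact Finset.mem_image.mpr ⟨_, this, rfl⟩
  · have hnc := hZ2 r hr hrZ
    rw [Consistent] at hnc
    push_neg at hnc
    obtain ⟨p, hpmem, q, hqmem, h1, h2⟩ := hnc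
    rcases Finset.mem_union.mp hpmem with hpK | hpK <;>
      rcases Finset.mem_union.mp hqmem with hqK | hqK
    · -- both in Kr r : contradict WFRule
      obtain ⟨c, hpe, hpc⟩ := Kr_fst_mem hpK
      obtain ⟨c', hqe, hqc⟩ := Kr_fst_mem hqK
      exfalso
      apply h2
      rw [hpe, hqe]
      have := hWF.2 r hr (p.1, c) hpc (q.1, c') hqc h1
      simp only at this
      rw [this, h1]
    · -- p in Kr r, q in K
      obtain ⟨c, hpe, hpc⟩ := Kr_fst_mem hpK
      by_cases hpa : p.1 = a
      · exact Finset.mem_image.mpr ⟨q, hqK, h1.symm.trans hpa⟩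
      · exfalso
        apply h2
        have hfp : f p.1 = c := hagree (p.1, c) hpc hpa
        rw [hpe, (hsh q hqK).2, ← h1, hfp]
    · -- q in Kr r, p in K
      obtain ⟨c, hqe, hqc⟩ := Kr_fst_mem hqK
      by_cases hqa : q.1 = a
      · exact Finset.mem_image.mpr ⟨p, hpK, by rw [h1, hqa]⟩
      · exfalso
        apply h2
        have hfq : f q.1 = c := hagree (q.1, c) hqc hqa
        rw [hqe, (hsh p hpK).2, h1, hfq]
    · exact absurd (hcons p hpK q hqK h1) h2

lemma keyLB (S : DRS) (hWF : WFS S) (f : Attr → ℕ) (hf : ∀ a ∈ AS S, f a ∈ VS S a)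
    (T : Finset Attr)
    (hT : ∀ a ∈ T, ∃ r ∈ S, a ∈ Ar r ∧ ∀ p ∈ r.1, p.1 ≠ a → f p.1 = p.2) :
    T.card ≤ hAR S := by
  obtain ⟨Γ, hov, hso, hdep⟩ := hAR_mem S
  obtain ⟨Q, hQd, hQ⟩ := core14 S hWF Γ hov hso f hf
  have : T ⊆ Q := by
    intro a ha
    obtain ⟨r, h1, h2, h3⟩ := hT a ha
    exact hQ a r h1 h2 h3
  calc T.card ≤ Q.card := Finset.card_le_card this
    _ ≤ depthT (Bo S) Γ := hQd
    _ = hAR S := hdep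

end Aux14

section Aux14b

lemma part1_lb (S : DRS) (hWF : WFS S) (h1 : kS S = 1 ∨ dS S = 1) : nS S ≤ hAR S := by
  have hfv : ∀ a ∈ AS S, fdef S a ∈ VS S a := fun a ha => fdef_mem ha
  have hT : ∀ a ∈ AS S, ∃ r ∈ S, a ∈ Ar r ∧ ∀ p ∈ r.1, p.1 ≠ a → fdef S p.1 = p.2 := by
    intro a ha
    obtain ⟨r, hr, har⟩ := Finset.mem_biUnion.mp ha
    refine ⟨r, hr, har, ?_⟩
    intro p hp hpa
    rcases h1 with hk | hd
    · have hle : (VS S p.1).card ≤ 1 := by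
        have := Finset.le_sup (f := fun a => (VS S a).card)
          (mem_AS' hr (Finset.mem_image.mpr ⟨p, hp, rfl⟩))
        rw [← kS, hk] at this
        exact this
      exact Finset.card_le_one.mp hle _ (hfv p.1 (mem_AS' hr (Finset.mem_image.mpr ⟨p, hp, rfl⟩)))
        _ (mem_VS' hr hp)
    · exfalso
      have hlen : ruleLen r ≤ 1 := by
        have := Finset.le_sup (f := ruleLen) hr
        rw [← dS, hd] at this
        exact this
      obtain ⟨q, hq, hqa⟩ := Finset.mem_image.mp har
      have hpq : p = q := Finset.card_le_one.mp hlen p hp q hq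
      exact hpa (hpq ▸ hqa)
  exact keyLB S hWF (fdef S) hfv (AS S) hT

/-- the tuple agreeing with a given rule `r` -/
def ftup (S : DRS) (r : Rule) (b : Attr) : ℕ :=
  if h : ∃ c, (b, c) ∈ r.1 then sInf {c | (b, c) ∈ r.1} else fdef S b

lemma ftup_agree {S : DRS} {r : Rule} (hWF : WFRule r) {p : Attr × ℕ} (hp : p ∈ r.1) :
    ftup S r p.1 = p.2 := by
  have hex : ∃ c, (p.1, c) ∈ r.1 := ⟨p.2, by simpa using hp⟩
  have hne : {c | (p.1, c) ∈ r.1}.Nonempty := hex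
  unfold ftup
  rw [dif_pos hex]
  have hmem : (p.1, sInf {c | (p.1, c) ∈ r.1}) ∈ r.1 := Nat.sInf_mem hne
  exact hWF _ hmem p hp rfl

lemma ftup_mem {S : DRS} {r : Rule} (hr : r ∈ S) {b : Attr} (hb : b ∈ AS S) :
    ftup S r b ∈ VS S b := by
  unfold ftup
  by_cases hex : ∃ c, (b, c) ∈ r.1
  · rw [dif_pos hex]
    have hne : {c | (b, c) ∈ r.1}.Nonempty := hex
    have hmem : (b, sInf {c | (b, c) ∈ r.1}) ∈ r.1 := Nat.sInf_mem hne
    have h2 := mem_VS' hr hmem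
    exact h2
  · rw [dif_neg hex]
    exact fdef_mem hb

lemma Ar_card {r : Rule} (hWF : WFRule r) : (Ar r).card = ruleLen r := by
  apply Finset.card_image_of_injOn
  intro p hp q hq hpq
  exact Prod.ext hpq (hWF p hp q hq hpq)

lemma dLB (S : DRS) (hWF : WFS S) : dS S ≤ hAR S := by
  obtain ⟨r, hr, hlen⟩ := Finset.exists_mem_eq_sup S hWF.1 ruleLen
  have hWFr := hWF.2 r hr
  have hT : ∀ a ∈ Ar r, ∃ r' ∈ S, a ∈ Ar r' ∧ ∀ p ∈ r'.1, p.1 ≠ a → ftup S r p.1 = p.2 :=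
    fun a ha => ⟨r, hr, ha, fun p hp _ => ftup_agree hWFr hp⟩
  have := keyLB S hWF (ftup S r) (fun b hb => ftup_mem hr hb) (Ar r) hT
  rwa [Ar_card hWFr, ← hlen] at this

lemma countLB (S : DRS) (hWF : WFS S) (k d : ℕ) (hk1 : 1 ≤ k)
    (hk : ∀ a ∈ AS S, (VS S a).card ≤ k)
    (hd : ∀ r ∈ S, ruleLen r ≤ d) (hd1 : 1 ≤ d)
    (Γ : DTree) (hov : TreeOver (Bo S) S Γ) (hso : Solves (CondAR S) (Bo S) Γ) :
    nS S ≤ k ^ (d - 1) * depthT (Bo S) Γ := by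
  classical
  set A := AS S with hA
  set h := depthT (Bo S) Γ with hh
  set P := A.pi (fun a => VS S a) with hP
  set F : ((a : Attr) → a ∈ A → ℕ) → Attr → ℕ :=
    fun g a => if ha : a ∈ A then g a ha else 0 with hF
  have hFgood : ∀ g ∈ P, ∀ a ∈ A, F g a ∈ VS S a := by
    intro g hg a ha
    simp only [hF]
    rw [dif_pos ha]
    exact Finset.mem_pi.mp hg a ha
  have hcore : ∀ g ∈ P, ∃ Q : Finset Attr, Q.card ≤ h ∧
      ∀ a r, r ∈ S → a ∈ Ar r → (∀ p ∈ r.1, p.1 ≠ a → F g p.1 = p.2) → a ∈ Q :=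
    fun g hg => core14 S hWF Γ hov hso (F g) (hFgood g hg)
  choose! Q hQ1 hQ2 using hcore
  have hrule : ∀ a ∈ A, ∃ r, r ∈ S ∧ a ∈ Ar r := by
    intro a ha
    obtain ⟨r, hr, har⟩ := Finset.mem_biUnion.mp ha
    exact ⟨r, hr, har⟩
  choose! rb hrb1 hrb2 using hrule
  have hTA : ∀ a ∈ A, ((Ar (rb a)).erase a) ⊆ A := by
    intro a ha b hb
    exact mem_AS' (hrb1 a ha) (Finset.mem_of_mem_erase hb)
  -- counting injection
  have hcount : ∀ a ∈ A,
      ∏ b ∈ A \ ((Ar (rb a)).erase a), (VS S b).card ≤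
        (P.filter (fun g => a ∈ Q g)).card := by
    intro a ha
    set T := (Ar (rb a)).erase a with hT
    set Φ : ((b : Attr) → b ∈ A \ T → ℕ) → ((b : Attr) → b ∈ A → ℕ) :=
      fun g b hb => if hbT : b ∈ T then ftup S (rb a) b
        else g b (Finset.mem_sdiff.mpr ⟨hb, hbT⟩) with hΦ
    have hmaps : ∀ g ∈ (A \ T).pi (fun b => VS S b), Φ g ∈ P.filter (fun g => a ∈ Q g) := by
      intro g hg
      have hgP : Φ g ∈ P := by
        rw [hP, Finset.mem_pi]
        intro b hb
        simp only [hΦ]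
        by_cases hbT : b ∈ T
        · rw [dif_pos hbT]
          exact ftup_mem (hrb1 a ha) hb
        · rw [dif_neg hbT]
          exact Finset.mem_pi.mp hg b _
      refine Finset.mem_filter.mpr ⟨hgP, ?_⟩
      apply hQ2 (Φ g) hgP a (rb a) (hrb1 a ha) (hrb2 a ha)
      intro p hp hpa
      have hpT : p.1 ∈ T := Finset.mem_erase.mpr ⟨hpa, Finset.mem_image.mpr ⟨p, hp, rfl⟩⟩
      have hpA : p.1 ∈ A := hTA a ha hpT
      simp only [hF, hΦ]
      rw [dif_pos hpA, dif_pos hpT]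
      exact ftup_agree (hWF.2 _ (hrb1 a ha)) hp
    have hinj : Set.InjOn Φ ((A \ T).pi (fun b => VS S b)) := by
      intro g hg g' hg' hgg
      funext b hb
      have hbA : b ∈ A := (Finset.mem_sdiff.mp hb).1
      have hbT : b ∉ T := (Finset.mem_sdiff.mp hb).2
      have := congrFun (congrFun hgg b) hbA
      simp only [hΦ, dif_neg hbT] at this
      convert this using 2
    calc ∏ b ∈ A \ T, (VS S b).card = ((A \ T).pi (fun b => VS S b)).card :=
          (Finset.card_pi _ _).symm
      _ ≤ _ := Finset.card_le_card_of_injOn Φ hmaps hinj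
  have main : ∑ a ∈ A, ∏ b ∈ A \ ((Ar (rb a)).erase a), (VS S b).card ≤
      (∏ b ∈ A, (VS S b).card) * h := by
    calc ∑ a ∈ A, ∏ b ∈ A \ ((Ar (rb a)).erase a), (VS S b).card
        ≤ ∑ a ∈ A, (P.filter fun g => a ∈ Q g).card := Finset.sum_le_sum hcount
      _ = ∑ g ∈ P, (A.filter fun a => a ∈ Q g).card := by
          simp only [Finset.card_filter]
          exact Finset.sum_comm
      _ ≤ ∑ _g ∈ P, h := Finset.sum_le_sum (fun g hg =>
          le_trans (Finset.card_le_card fun x hx => (Finset.mem_filter.mp hx).2) (hQ1 g hg))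
      _ = P.card * h := by rw [Finset.sum_const, smul_eq_mul]
      _ = (∏ b ∈ A, (VS S b).card) * h := by rw [hP, Finset.card_pi]
  have hMa : ∀ a ∈ A, (∏ b ∈ A, (VS S b).card) ≤
      k ^ (d - 1) * ∏ b ∈ A \ ((Ar (rb a)).erase a), (VS S b).card := by
    intro a ha
    set T := (Ar (rb a)).erase a with hT
    have hsd : (∏ b ∈ A \ T, (VS S b).card) * ∏ b ∈ T, (VS S b).card =
        ∏ b ∈ A, (VS S b).card := Finset.prod_sdiff (hTA a ha)
    have hTcard : T.card ≤ d - 1 := by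
      have h1 : (Ar (rb a)).card ≤ d :=
        le_trans (Finset.card_image_le) (hd _ (hrb1 a ha))
      have h2 : T.card = (Ar (rb a)).card - 1 := Finset.card_erase_of_mem (hrb2 a ha)
      omega
    have hTprod : ∏ b ∈ T, (VS S b).card ≤ k ^ (d - 1) :=
      le_trans (Finset.prod_le_pow_card T _ k (fun b hb => hk b (hTA a ha hb)))
        (Nat.pow_le_pow_right hk1 hTcard)
    calc ∏ b ∈ A, (VS S b).card
        = (∏ b ∈ A \ T, (VS S b).card) * ∏ b ∈ T, (VS S b).card := hsd.symm
      _ ≤ (∏ b ∈ A \ T, (VS S b).card) * k ^ (d - 1) := Nat.mul_le_mul_left _ hTprod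
      _ = k ^ (d - 1) * ∏ b ∈ A \ T, (VS S b).card := Nat.mul_comm _ _
  have hMpos : 0 < ∏ b ∈ A, (VS S b).card :=
    Finset.prod_pos fun b hb => Finset.card_pos.mpr (VS_nonempty' hb)
  have final : nS S * ∏ b ∈ A, (VS S b).card ≤ (k ^ (d - 1) * h) * ∏ b ∈ A, (VS S b).card := by
    calc nS S * ∏ b ∈ A, (VS S b).card = ∑ _a ∈ A, ∏ b ∈ A, (VS S b).card := by
          rw [Finset.sum_const, smul_eq_mul]; rfl
      _ ≤ ∑ a ∈ A, k ^ (d - 1) * ∏ b ∈ A \ ((Ar (rb a)).erase a), (VS S b).card :=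
          Finset.sum_le_sum hMa
      _ = k ^ (d - 1) * ∑ a ∈ A, ∏ b ∈ A \ ((Ar (rb a)).erase a), (VS S b).card :=
          (Finset.mul_sum _ _ _).symm
      _ ≤ k ^ (d - 1) * ((∏ b ∈ A, (VS S b).card) * h) := Nat.mul_le_mul_left _ main
      _ = (k ^ (d - 1) * h) * ∏ b ∈ A, (VS S b).card := by ring
  exact Nat.le_of_mul_le_mul_right final hMpos

end Aux14b

section Aux14c

lemma mem_VS_iff {S : DRS} {a : Attr} {c : ℕ} : c ∈ VS S a ↔ ∃ r ∈ S, (a, c) ∈ r.1 := by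
  simp only [VS, Finset.mem_biUnion, Finset.mem_image, Finset.mem_filter]
  constructor
  · rintro ⟨r, hr, p, ⟨hp, h1⟩, h2⟩
    subst h1; subst h2
    exact ⟨r, hr, by simpa using hp⟩
  · rintro ⟨r, hr, hp⟩
    exact ⟨r, hr, (a, c), ⟨hp, rfl⟩, rfl⟩

/-- Witness system with parameters `n`, `d`, `k`. -/
def Sw (n d k : ℕ) : DRS :=
  insert ((Finset.range d).image (fun i => (i, 0)), 0)
    ((Finset.range n).image (fun i => (({(i, 0)} : Finset (Attr × ℕ)), 0)) ∪
     (Finset.range k).image (fun j => (({(0, j)} : Finset (Attr × ℕ)), 0)))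

lemma mem_Sw {n d k : ℕ} {r : Rule} :
    r ∈ Sw n d k ↔ r = ((Finset.range d).image (fun i => (i, 0)), 0) ∨
      (∃ i < n, r = (({(i, 0)} : Finset (Attr × ℕ)), 0)) ∨
      (∃ j < k, r = (({(0, j)} : Finset (Attr × ℕ)), 0)) := by
  simp only [Sw, Finset.mem_insert, Finset.mem_union, Finset.mem_image, Finset.mem_range]
  constructor
  · rintro (h | ⟨i, hi, h⟩ | ⟨j, hj, h⟩)
    exacts [Or.inl h, Or.inr (Or.inl ⟨i, hi, h.symm⟩), Or.inr (Or.inr ⟨j, hj, h.symm⟩)]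
  · rintro (h | ⟨i, hi, h⟩ | ⟨j, hj, h⟩)
    exacts [Or.inl h, Or.inr (Or.inl ⟨i, hi, h.symm⟩), Or.inr (Or.inr ⟨j, hj, h.symm⟩)]

lemma Sw_WF (n d k : ℕ) : WFS (Sw n d k) := by
  constructor
  · exact ⟨_, Finset.mem_insert_self _ _⟩
  · intro r hr
    rcases mem_Sw.mp hr with h | ⟨i, _, h⟩ | ⟨j, _, h⟩ <;> subst h <;> intro p hp q hq hpq
    · simp only [Finset.mem_image, Finset.mem_range] at hp hq
      obtain ⟨i, _, rfl⟩ := hp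
      obtain ⟨i', _, rfl⟩ := hq
      rfl
    · simp only [Finset.mem_singleton] at hp hq
      rw [hp, hq]
    · simp only [Finset.mem_singleton] at hp hq
      rw [hp, hq]

lemma Ar_R1 (d : ℕ) : Ar ((Finset.range d).image (fun i => (i, 0)), 0) = Finset.range d := by
  ext a
  simp [Ar]

lemma Ar_single (p : Attr × ℕ) (c : ℕ) : Ar ({p}, c) = {p.1} := by
  ext a
  simp [Ar]

lemma Sw_AS (n d k : ℕ) (hn : 1 ≤ n) (hdn : d ≤ n) : AS (Sw n d k) = Finset.range n := by
  apply Finset.Subset.antisymm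
  · intro a ha
    obtain ⟨r, hr, har⟩ := Finset.mem_biUnion.mp ha
    rcases mem_Sw.mp hr with h | ⟨i, hi, h⟩ | ⟨j, hj, h⟩ <;> subst h
    · rw [Ar_R1] at har
      exact Finset.mem_range.mpr (lt_of_lt_of_le (Finset.mem_range.mp har) hdn)
    · rw [Ar_single] at har
      simp only [Finset.mem_singleton] at har
      subst har
      exact Finset.mem_range.mpr hi
    · rw [Ar_single] at har
      simp only [Finset.mem_singleton] at har
      subst har
      exact Finset.mem_range.mpr hn
  · intro a ha
    refine Finset.mem_biUnion.mpr ⟨(({(a, 0)} : Finset (Attr × ℕ)), 0),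
      mem_Sw.mpr (Or.inr (Or.inl ⟨a, Finset.mem_range.mp ha, rfl⟩)), ?_⟩
    rw [Ar_single]
    exact Finset.mem_singleton_self _

lemma Sw_nS (n d k : ℕ) (hn : 1 ≤ n) (hdn : d ≤ n) : nS (Sw n d k) = n := by
  unfold nS
  rw [Sw_AS n d k hn hdn, Finset.card_range]

lemma Sw_dS (n d k : ℕ) (hd : 1 ≤ d) : dS (Sw n d k) = d := by
  apply le_antisymm
  · apply Finset.sup_le
    intro r hr
    rcases mem_Sw.mp hr with h | ⟨i, _, h⟩ | ⟨j, _, h⟩ <;> subst h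
    · exact le_trans Finset.card_image_le (le_of_eq (Finset.card_range d))
    · simpa [ruleLen] using hd
    · simpa [ruleLen] using hd
  · have hlen : ruleLen ((Finset.range d).image (fun i => (i, 0)), 0) = d := by
      unfold ruleLen
      rw [Finset.card_image_of_injective _ (fun a b h => by simpa using h), Finset.card_range]
    calc d = ruleLen ((Finset.range d).image (fun i => (i, 0)), 0) := hlen.symm
      _ ≤ dS (Sw n d k) := Finset.le_sup (Finset.mem_insert_self _ _)

lemma Sw_VS0 (n d k : ℕ) (hn : 1 ≤ n) (hk : 1 ≤ k) : VS (Sw n d k) 0 = Finset.range k := by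
  apply Finset.Subset.antisymm
  · intro c hc
    obtain ⟨r, hr, hp⟩ := mem_VS_iff.mp hc
    rcases mem_Sw.mp hr with h | ⟨i, _, h⟩ | ⟨j, hj, h⟩ <;> subst h
    · simp only [Finset.mem_image, Finset.mem_range] at hp
      obtain ⟨i, _, hie⟩ := hp
      have hc0 : c = 0 := by
        have := congrArg Prod.snd hie
        simpa using this.symm
      subst hc0
      exact Finset.mem_range.mpr hk
    · simp only [Finset.mem_singleton, Prod.mk.injEq] at hp
      rw [hp.2]
      exact Finset.mem_range.mpr hk
    · simp only [Finset.mem_singleton, Prod.mk.injEq] at hp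
      rw [hp.2]
      exact Finset.mem_range.mpr hj
  · intro c hc
    exact mem_VS_iff.mpr ⟨(({(0, c)} : Finset (Attr × ℕ)), 0),
      mem_Sw.mpr (Or.inr (Or.inr ⟨c, Finset.mem_range.mp hc, rfl⟩)),
      Finset.mem_singleton_self _⟩

lemma Sw_VS_ne (n d k : ℕ) {a : Attr} (ha : a ≠ 0) : VS (Sw n d k) a ⊆ {0} := by
  intro c hc
  obtain ⟨r, hr, hp⟩ := mem_VS_iff.mp hc
  rcases mem_Sw.mp hr with h | ⟨i, _, h⟩ | ⟨j, _, h⟩ <;> subst h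
  · simp only [Finset.mem_image, Finset.mem_range] at hp
    obtain ⟨i, _, hie⟩ := hp
    have hc0 : c = 0 := by
      have := congrArg Prod.snd hie
      simpa using this.symm
    simp [hc0]
  · simp only [Finset.mem_singleton, Prod.mk.injEq] at hp
    simp [hp.2]
  · simp only [Finset.mem_singleton, Prod.mk.injEq] at hp
    exact absurd hp.1 ha

lemma Sw_kS (n d k : ℕ) (hn : 1 ≤ n) (hk : 1 ≤ k) (hdn : d ≤ n) : kS (Sw n d k) = k := by
  unfold kS
  rw [Sw_AS n d k hn hdn]
  apply le_antisymm
  · apply Finset.sup_le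
    intro a ha
    by_cases h0 : a = 0
    · subst h0
      rw [Sw_VS0 n d k hn hk, Finset.card_range]
    · exact le_trans (Finset.card_le_card (Sw_VS_ne n d k h0)) (by simpa using hk)
  · have h0 : (0 : ℕ) ∈ Finset.range n := Finset.mem_range.mpr hn
    have hle : (VS (Sw n d k) 0).card ≤ (Finset.range n).sup fun a => (VS (Sw n d k) a).card :=
      Finset.le_sup (f := fun a => (VS (Sw n d k) a).card) h0
    rwa [Sw_VS0 n d k hn hk, Finset.card_range] at hle

end Aux14c


/-- lower bounds on `h_AR(n,d,k)`. -/
theorem stmt14 (n d k : ℕ) (hn : 0 < n) (hd : 0 < d) (hk : 0 < k) (hdn : d ≤ n) :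
    ((k = 1 ∨ d = 1) → hmin hAR n d k = n) ∧
    (2 ≤ k → 2 ≤ d →
      max (d : ℝ) ((n : ℝ) * ((k : ℝ) - 1) / (k : ℝ) ^ d) ≤ (hmin hAR n d k : ℝ)) := by
  have hWFw : WFS (Sw n d k) := Sw_WF n d k
  have hnw : nS (Sw n d k) = n := Sw_nS n d k hn hdn
  have hdw : dS (Sw n d k) = d := Sw_dS n d k hd
  have hkw : kS (Sw n d k) = k := Sw_kS n d k hn hk hdn
  constructor
  · intro h1
    have hlb : nS (Sw n d k) ≤ hAR (Sw n d k) := by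
      apply part1_lb _ hWFw
      rcases h1 with h | h
      · exact Or.inl (by rw [hkw, h])
      · exact Or.inr (by rw [hdw, h])
    have heq : hAR (Sw n d k) = n :=
      le_antisymm (le_trans (hAR_le_nS _) (le_of_eq hnw)) (by rwa [hnw] at hlb)
    unfold hmin
    have hmemn : n ∈ {m | ∃ S, WFS S ∧ nS S = n ∧ dS S = d ∧ kS S = k ∧ hAR S = m} :=
      ⟨Sw n d k, hWFw, hnw, hdw, hkw, heq⟩
    apply le_antisymm
    · exact Nat.sInf_le hmemn
    · apply le_csInf ⟨n, hmemn⟩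
      rintro m ⟨S, hS, hn', hd', hk', rfl⟩
      have hlbS : nS S ≤ hAR S := by
        apply part1_lb S hS
        rcases h1 with h | h
        · exact Or.inl (hk'.trans h)
        · exact Or.inr (hd'.trans h)
      rwa [hn'] at hlbS
  · intro hk2 hd2
    have hne : {m | ∃ S, WFS S ∧ nS S = n ∧ dS S = d ∧ kS S = k ∧ hAR S = m}.Nonempty :=
      ⟨hAR (Sw n d k), Sw n d k, hWFw, hnw, hdw, hkw, rfl⟩
    have hmem := Nat.sInf_mem hne
    rw [Set.mem_setOf_eq] at hmem
    obtain ⟨S1, hWF1, hn1, hd1, hk1, hm1⟩ := hmem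
    have hm1' : hAR S1 = hmin hAR n d k := hm1
    rw [max_le_iff]
    have hd_le : d ≤ hmin hAR n d k := by
      have hdd := dLB S1 hWF1
      rwa [hd1, hm1'] at hdd
    constructor
    · exact_mod_cast hd_le
    · obtain ⟨Γ, hov, hso, hdep⟩ := hAR_mem S1
      have hcnt := countLB S1 hWF1 k d (by omega)
        (fun a ha => by rw [← hk1]; exact Finset.le_sup (f := fun a => (VS S1 a).card) ha)
        (fun r hr => by rw [← hd1]; exact Finset.le_sup hr) (by omega) Γ hov hso
      rw [hdep, hm1', hn1] at hcnt
      set m := hmin hAR n d k with hmdef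
      have hnat : n * (k - 1) ≤ m * k ^ d := by
        calc n * (k - 1) ≤ (k ^ (d - 1) * m) * (k - 1) := Nat.mul_le_mul_right _ hcnt
          _ = m * (k ^ (d - 1) * (k - 1)) := by ring
          _ ≤ m * k ^ d := by
              apply Nat.mul_le_mul_left
              calc k ^ (d - 1) * (k - 1) ≤ k ^ (d - 1) * k :=
                    Nat.mul_le_mul_left _ (by omega)
                _ = k ^ (d - 1 + 1) := (pow_succ k (d - 1)).symm
                _ = k ^ d := by congr 1; omega
      have hkR : (0 : ℝ) < (k : ℝ) := by exact_mod_cast hk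
      have hkpos : (0 : ℝ) < (k : ℝ) ^ d := pow_pos hkR d
      rw [div_le_iff₀ hkpos]
      have hcast : ((k : ℝ) - 1) = ((k - 1 : ℕ) : ℝ) := by
        rw [Nat.cast_sub (by omega : 1 ≤ k)]
        norm_num
      rw [hcast]
      calc (n : ℝ) * ((k - 1 : ℕ) : ℝ) = ((n * (k - 1) : ℕ) : ℝ) := by push_cast; ring
        _ ≤ ((m * k ^ d : ℕ) : ℝ) := by exact_mod_cast hnat
        _ = (m : ℝ) * (k : ℝ) ^ d := by push_cast; ring
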